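/- Let Π = {t_0 < t_1 < ... < t_{2^m}} and Π' = {s_0 < ... < s_{2^{m'}}} be partitions of [a,b] and [c,d] respectively, and let F : [a,b] × [c,d] → ℝ have finite (p,q)-bivariation for p, q ≥ 1. Let ρ, σ : [0,∞) → [0,∞) be non-decreasing with ρ(u)σ(u) = u. Then Σ_{i=1}^{2^m} Σ_{j=1}^{2^{m'}} |Δ_iΔ_j F(t_i, s_j)| ≤ 4 · 2^{m+m'} ρ(‖F‖_{1;p} / 2^{m/p}) σ(‖F‖_{2;q} / 2^{m'/q}). -/

import Mathlib

open Set

noncomputable section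

/-- Rectangular increment of a two-variable function. -/
def rect (H : ℝ → ℝ → ℝ) (x x' y y' : ℝ) : ℝ :=
  H x' y' - H x y' - H x' y + H x y

/-- `t` is a (monotone) partition of `[a,b]`. -/
def IsPartition {n : ℕ} (a b : ℝ) (t : Fin (n + 1) → ℝ) : Prop :=
  Monotone t ∧ t 0 = a ∧ t (Fin.last n) = b

/-- The set of `p`-variation sums of `f` over partitions of `[a,b]`. -/
def pVarSet (p a b : ℝ) (f : ℝ → ℝ) : Set ℝ :=
  {v | ∃ (n : ℕ) (t : Fin (n + 1) → ℝ), IsPartition a b t ∧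
        v = ∑ i : Fin n, |f (t i.succ) - f (t i.castSucc)| ^ p}

/-- The `p`-variation seminorm `‖f‖_{[a,b],p}`. -/
def pVarNorm (p a b : ℝ) (f : ℝ → ℝ) : ℝ :=
  sSup (pVarSet p a b f) ^ (1 / p)

def biVar1Set (p a b c d : ℝ) (F : ℝ → ℝ → ℝ) : Set ℝ :=
  {v | ∃ y₁ ∈ Icc c d, ∃ y₂ ∈ Icc c d, v = pVarNorm p a b (fun x => F x y₁ - F x y₂)}

/-- The first bivariation seminorm `‖F‖_{1;p}`. -/
def biVar1 (p a b c d : ℝ) (F : ℝ → ℝ → ℝ) : ℝ := sSup (biVar1Set p a b c d F)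

def biVar2Set (q a b c d : ℝ) (F : ℝ → ℝ → ℝ) : Set ℝ :=
  {v | ∃ x₁ ∈ Icc a b, ∃ x₂ ∈ Icc a b, v = pVarNorm q c d (fun y => F x₁ y - F x₂ y)}

/-- The second bivariation seminorm `‖F‖_{2;q}`. -/
def biVar2 (q a b c d : ℝ) (F : ℝ → ℝ → ℝ) : ℝ := sSup (biVar2Set q a b c d F)

/-- `‖F‖_{1;p} < ∞`: all the suprema involved are finite. -/
def FiniteBiVar1 (p a b c d : ℝ) (F : ℝ → ℝ → ℝ) : Prop :=
  (∀ y₁ ∈ Icc c d, ∀ y₂ ∈ Icc c d,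
      BddAbove (pVarSet p a b (fun x => F x y₁ - F x y₂))) ∧
  BddAbove (biVar1Set p a b c d F)

/-- `‖F‖_{2;q} < ∞`: all the suprema involved are finite. -/
def FiniteBiVar2 (q a b c d : ℝ) (F : ℝ → ℝ → ℝ) : Prop :=
  (∀ x₁ ∈ Icc a b, ∀ x₂ ∈ Icc a b,
      BddAbove (pVarSet q c d (fun y => F x₁ y - F x₂ y))) ∧
  BddAbove (biVar2Set q a b c d F)

/-- Hölder-type bound: if the `p`-power sum of nonnegative reals is at most `V ^ p`,
then the plain sum is at most `n * (V / n ^ (1/p))`. -/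
lemma holder_aux {n : ℕ} (hn : 0 < n) (a : Fin n → ℝ) (ha : ∀ i, 0 ≤ a i)
    {p : ℝ} (hp : 1 ≤ p) {V : ℝ} (hV : 0 ≤ V)
    (hsum : ∑ i : Fin n, a i ^ p ≤ V ^ p) :
    ∑ i : Fin n, a i ≤ (n : ℝ) * (V / (n : ℝ) ^ ((1 : ℝ) / p)) := by
  have hp0 : (0 : ℝ) < p := lt_of_lt_of_le one_pos hp
  have hN : (0 : ℝ) < (n : ℝ) := by exact_mod_cast hn
  have hw : ∀ i ∈ (Finset.univ : Finset (Fin n)), (0 : ℝ) ≤ (n : ℝ)⁻¹ := fun _ _ => by positivity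
  have hw' : ∑ _i : Fin n, (n : ℝ)⁻¹ = 1 := by
    rw [Finset.sum_const, Finset.card_univ, Fintype.card_fin, nsmul_eq_mul,
      mul_inv_cancel₀ hN.ne']
  have h1 := Real.arith_mean_le_rpow_mean Finset.univ (fun _ => (n : ℝ)⁻¹) a hw hw'
    (fun i _ => ha i) hp
  have h2 : ∑ i : Fin n, (n : ℝ)⁻¹ * a i = (n : ℝ)⁻¹ * ∑ i : Fin n, a i := by
    rw [Finset.mul_sum]
  have h3 : ∑ i : Fin n, (n : ℝ)⁻¹ * a i ^ p = (n : ℝ)⁻¹ * ∑ i : Fin n, a i ^ p := by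
    rw [Finset.mul_sum]
  rw [h2, h3] at h1
  have h4 : ((n : ℝ)⁻¹ * ∑ i : Fin n, a i ^ p) ^ ((1 : ℝ) / p)
      ≤ ((n : ℝ)⁻¹ * V ^ p) ^ ((1 : ℝ) / p) := by
    apply Real.rpow_le_rpow
    · apply mul_nonneg (by positivity)
      exact Finset.sum_nonneg fun i _ => Real.rpow_nonneg (ha i) p
    · exact mul_le_mul_of_nonneg_left hsum (by positivity)
    · positivity
  have h5 : ((n : ℝ)⁻¹ * V ^ p) ^ ((1 : ℝ) / p)
      = ((n : ℝ) ^ ((1 : ℝ) / p))⁻¹ * V := by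
    rw [Real.mul_rpow (by positivity) (Real.rpow_nonneg hV p),
      Real.inv_rpow hN.le, ← Real.rpow_mul hV, mul_one_div, div_self hp0.ne',
      Real.rpow_one]
  have h6 : (n : ℝ)⁻¹ * ∑ i : Fin n, a i ≤ ((n : ℝ) ^ ((1 : ℝ) / p))⁻¹ * V :=
    h1.trans (h5 ▸ h4)
  have := mul_le_mul_of_nonneg_left h6 hN.le
  calc ∑ i : Fin n, a i = (n : ℝ) * ((n : ℝ)⁻¹ * ∑ i : Fin n, a i) := by
        field_simp
    _ ≤ (n : ℝ) * (((n : ℝ) ^ ((1 : ℝ) / p))⁻¹ * V) := this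
    _ = (n : ℝ) * (V / (n : ℝ) ^ ((1 : ℝ) / p)) := by rw [div_eq_mul_inv]; ring

lemma cast_pow_rpow (m : ℕ) {p : ℝ} (hp0 : p ≠ 0) :
    ((2 ^ m : ℕ) : ℝ) ^ ((1 : ℝ) / p) = (2 : ℝ) ^ ((m : ℝ) / p) := by
  have : ((2 ^ m : ℕ) : ℝ) = (2 : ℝ) ^ ((m : ℝ)) := by
    push_cast
    rw [Real.rpow_natCast]
  rw [this, ← Real.rpow_mul (by norm_num), mul_one_div]

/-- bound for the sum of absolute rectangular increments of `F`
over a `2^m × 2^{m'}` grid in terms of the `(p,q)`-bivariation seminorms. -/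
theorem sum_abs_rect_le_rho_sigma
    (a b c d p q : ℝ) (hp : 1 ≤ p) (hq : 1 ≤ q)
    (F : ℝ → ℝ → ℝ) (hF1 : FiniteBiVar1 p a b c d F) (hF2 : FiniteBiVar2 q a b c d F)
    (ρ σ : ℝ → ℝ)
    (hρ : MonotoneOn ρ (Set.Ici 0)) (hσ : MonotoneOn σ (Set.Ici 0))
    (hρ0 : ∀ u ≥ (0 : ℝ), 0 ≤ ρ u) (hσ0 : ∀ u ≥ (0 : ℝ), 0 ≤ σ u)
    (hρσ : ∀ u ≥ (0 : ℝ), ρ u * σ u = u)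
    (m m' : ℕ) (t : Fin (2 ^ m + 1) → ℝ) (s : Fin (2 ^ m' + 1) → ℝ)
    (ht : IsPartition a b t) (hs : IsPartition c d s) :
    ∑ i : Fin (2 ^ m), ∑ j : Fin (2 ^ m'),
        |rect F (t i.castSucc) (t i.succ) (s j.castSucc) (s j.succ)|
      ≤ 4 * 2 ^ (m + m') *
          ρ (biVar1 p a b c d F / (2 : ℝ) ^ ((m : ℝ) / p)) *
          σ (biVar2 q a b c d F / (2 : ℝ) ^ ((m' : ℝ) / q)) := by
  obtain ⟨htm, hta, htb⟩ := ht
  obtain ⟨hsm, hsc, hsd⟩ := hs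
  have hp0 : (0 : ℝ) < p := lt_of_lt_of_le one_pos hp
  have hq0 : (0 : ℝ) < q := lt_of_lt_of_le one_pos hq
  set V1 := biVar1 p a b c d F with hV1def
  set V2 := biVar2 q a b c d F with hV2def
  set α := V1 / (2 : ℝ) ^ ((m : ℝ) / p) with hαdef
  set β := V2 / (2 : ℝ) ^ ((m' : ℝ) / q) with hβdef
  have htmem : ∀ k : Fin (2 ^ m + 1), t k ∈ Icc a b := fun k =>
    ⟨by rw [← hta]; exact htm (Fin.zero_le k), by rw [← htb]; exact htm (Fin.le_last k)⟩
  have hsmem : ∀ k : Fin (2 ^ m' + 1), s k ∈ Icc c d := fun k =>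
    ⟨by rw [← hsc]; exact hsm (Fin.zero_le k), by rw [← hsd]; exact hsm (Fin.le_last k)⟩
  -- column bound
  have hcol : ∀ j : Fin (2 ^ m'), 0 ≤ V1 ∧
      ∑ i : Fin (2 ^ m), |rect F (t i.castSucc) (t i.succ) (s j.castSucc) (s j.succ)|
        ≤ ((2 ^ m : ℕ) : ℝ) * α := by
    intro j
    set y₁ := s j.succ
    set y₂ := s j.castSucc
    set f : ℝ → ℝ := fun x => F x y₁ - F x y₂ with hfdef
    set Sp := ∑ i : Fin (2 ^ m), |f (t i.succ) - f (t i.castSucc)| ^ p with hSpdef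
    have hmem : Sp ∈ pVarSet p a b f := ⟨2 ^ m, t, ⟨htm, hta, htb⟩, rfl⟩
    have hbdd := hF1.1 y₁ (hsmem _) y₂ (hsmem _)
    have hSpM : Sp ≤ sSup (pVarSet p a b f) := le_csSup hbdd hmem
    have hSp0 : 0 ≤ Sp :=
      Finset.sum_nonneg fun i _ => Real.rpow_nonneg (abs_nonneg _) p
    have hM0 : 0 ≤ sSup (pVarSet p a b f) := hSp0.trans hSpM
    have hnmem : pVarNorm p a b f ∈ biVar1Set p a b c d F :=
      ⟨y₁, hsmem _, y₂, hsmem _, rfl⟩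
    have hnV1 : pVarNorm p a b f ≤ V1 := le_csSup hF1.2 hnmem
    have hn0 : 0 ≤ pVarNorm p a b f := Real.rpow_nonneg hM0 _
    have hV10 : 0 ≤ V1 := hn0.trans hnV1
    refine ⟨hV10, ?_⟩
    have hMeq : sSup (pVarSet p a b f) = pVarNorm p a b f ^ p := by
      rw [pVarNorm, ← Real.rpow_mul hM0, one_div, inv_mul_cancel₀ hp0.ne',
        Real.rpow_one]
    have hsum : Sp ≤ V1 ^ p := by
      refine hSpM.trans ?_
      rw [hMeq]
      exact Real.rpow_le_rpow hn0 hnV1 hp0.le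
    have habs : ∀ i : Fin (2 ^ m),
        |rect F (t i.castSucc) (t i.succ) (s j.castSucc) (s j.succ)|
          = |f (t i.succ) - f (t i.castSucc)| := by
      intro i
      congr 1
      simp only [rect, hfdef]
      ring
    calc ∑ i : Fin (2 ^ m),
          |rect F (t i.castSucc) (t i.succ) (s j.castSucc) (s j.succ)|
        = ∑ i : Fin (2 ^ m), |f (t i.succ) - f (t i.castSucc)| := by
          exact Finset.sum_congr rfl fun i _ => habs i
      _ ≤ ((2 ^ m : ℕ) : ℝ) * (V1 / ((2 ^ m : ℕ) : ℝ) ^ ((1 : ℝ) / p)) :=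
          holder_aux (Nat.two_pow_pos m) _
            (fun i => abs_nonneg _) hp hV10 hsum
      _ = ((2 ^ m : ℕ) : ℝ) * α := by rw [cast_pow_rpow m hp0.ne']
  -- row bound
  have hrow : ∀ i : Fin (2 ^ m), 0 ≤ V2 ∧
      ∑ j : Fin (2 ^ m'), |rect F (t i.castSucc) (t i.succ) (s j.castSucc) (s j.succ)|
        ≤ ((2 ^ m' : ℕ) : ℝ) * β := by
    intro i
    set x₁ := t i.succ
    set x₂ := t i.castSucc
    set g : ℝ → ℝ := fun y => F x₁ y - F x₂ y with hgdef
    set Sq := ∑ j : Fin (2 ^ m'), |g (s j.succ) - g (s j.castSucc)| ^ q with hSqdef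
    have hmem : Sq ∈ pVarSet q c d g := ⟨2 ^ m', s, ⟨hsm, hsc, hsd⟩, rfl⟩
    have hbdd := hF2.1 x₁ (htmem _) x₂ (htmem _)
    have hSqM : Sq ≤ sSup (pVarSet q c d g) := le_csSup hbdd hmem
    have hSq0 : 0 ≤ Sq :=
      Finset.sum_nonneg fun j _ => Real.rpow_nonneg (abs_nonneg _) q
    have hM0 : 0 ≤ sSup (pVarSet q c d g) := hSq0.trans hSqM
    have hnmem : pVarNorm q c d g ∈ biVar2Set q a b c d F :=
      ⟨x₁, htmem _, x₂, htmem _, rfl⟩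
    have hnV2 : pVarNorm q c d g ≤ V2 := le_csSup hF2.2 hnmem
    have hn0 : 0 ≤ pVarNorm q c d g := Real.rpow_nonneg hM0 _
    have hV20 : 0 ≤ V2 := hn0.trans hnV2
    refine ⟨hV20, ?_⟩
    have hMeq : sSup (pVarSet q c d g) = pVarNorm q c d g ^ q := by
      rw [pVarNorm, ← Real.rpow_mul hM0, one_div, inv_mul_cancel₀ hq0.ne',
        Real.rpow_one]
    have hsum : Sq ≤ V2 ^ q := by
      refine hSqM.trans ?_
      rw [hMeq]
      exact Real.rpow_le_rpow hn0 hnV2 hq0.le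
    have habs : ∀ j : Fin (2 ^ m'),
        |rect F (t i.castSucc) (t i.succ) (s j.castSucc) (s j.succ)|
          = |g (s j.succ) - g (s j.castSucc)| := by
      intro j
      congr 1
      simp only [rect, hgdef]
      ring
    calc ∑ j : Fin (2 ^ m'),
          |rect F (t i.castSucc) (t i.succ) (s j.castSucc) (s j.succ)|
        = ∑ j : Fin (2 ^ m'), |g (s j.succ) - g (s j.castSucc)| := by
          exact Finset.sum_congr rfl fun j _ => habs j
      _ ≤ ((2 ^ m' : ℕ) : ℝ) * (V2 / ((2 ^ m' : ℕ) : ℝ) ^ ((1 : ℝ) / q)) :=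
          holder_aux (Nat.two_pow_pos m') _
            (fun j => abs_nonneg _) hq hV20 hsum
      _ = ((2 ^ m' : ℕ) : ℝ) * β := by rw [cast_pow_rpow m' hq0.ne']
  -- nonnegativity of V1, V2, α, β
  have hV10 : 0 ≤ V1 := (hcol ⟨0, Nat.two_pow_pos m'⟩).1
  have hV20 : 0 ≤ V2 := (hrow ⟨0, Nat.two_pow_pos m⟩).1
  have hα0 : 0 ≤ α := div_nonneg hV10 (Real.rpow_nonneg (by norm_num) _)
  have hβ0 : 0 ≤ β := div_nonneg hV20 (Real.rpow_nonneg (by norm_num) _)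
  set S := ∑ i : Fin (2 ^ m), ∑ j : Fin (2 ^ m'),
      |rect F (t i.castSucc) (t i.succ) (s j.castSucc) (s j.succ)| with hSdef
  have hSα : S ≤ ((2 ^ m' : ℕ) : ℝ) * (((2 ^ m : ℕ) : ℝ) * α) := by
    rw [hSdef, Finset.sum_comm]
    calc ∑ j : Fin (2 ^ m'), ∑ i : Fin (2 ^ m),
          |rect F (t i.castSucc) (t i.succ) (s j.castSucc) (s j.succ)|
        ≤ ∑ _j : Fin (2 ^ m'), ((2 ^ m : ℕ) : ℝ) * α :=
          Finset.sum_le_sum fun j _ => (hcol j).2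
      _ = ((2 ^ m' : ℕ) : ℝ) * (((2 ^ m : ℕ) : ℝ) * α) := by
          rw [Finset.sum_const, Finset.card_univ, Fintype.card_fin, nsmul_eq_mul]
  have hSβ : S ≤ ((2 ^ m : ℕ) : ℝ) * (((2 ^ m' : ℕ) : ℝ) * β) := by
    rw [hSdef]
    calc ∑ i : Fin (2 ^ m), ∑ j : Fin (2 ^ m'),
          |rect F (t i.castSucc) (t i.succ) (s j.castSucc) (s j.succ)|
        ≤ ∑ _i : Fin (2 ^ m), ((2 ^ m' : ℕ) : ℝ) * β :=
          Finset.sum_le_sum fun i _ => (hrow i).2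
      _ = ((2 ^ m : ℕ) : ℝ) * (((2 ^ m' : ℕ) : ℝ) * β) := by
          rw [Finset.sum_const, Finset.card_univ, Fintype.card_fin, nsmul_eq_mul]
  have hKey : S ≤ (2 : ℝ) ^ (m + m') * min α β := by
    rcases min_cases α β with ⟨h1, _⟩ | ⟨h1, _⟩ <;> rw [h1]
    · refine hSα.trans (le_of_eq ?_)
      push_cast
      ring
    · refine hSβ.trans (le_of_eq ?_)
      push_cast
      ring
  have hmin0 : (0 : ℝ) ≤ min α β := le_min hα0 hβ0
  have hmin : min α β ≤ ρ α * σ β := by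
    have h1 : ρ (min α β) * σ (min α β) = min α β := hρσ _ hmin0
    have h2 : ρ (min α β) ≤ ρ α := hρ hmin0 hα0 (min_le_left _ _)
    have h3 : σ (min α β) ≤ σ β := hσ hmin0 hβ0 (min_le_right _ _)
    calc min α β = ρ (min α β) * σ (min α β) := h1.symm
      _ ≤ ρ α * σ β :=
        mul_le_mul h2 h3 (hσ0 _ hmin0) (hρ0 _ hα0)
  have hpow : (0 : ℝ) ≤ (2 : ℝ) ^ (m + m') := by positivity
  calc S ≤ (2 : ℝ) ^ (m + m') * min α β := hKey
    _ ≤ (2 : ℝ) ^ (m + m') * (ρ α * σ β) :=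
        mul_le_mul_of_nonneg_left hmin hpow
    _ ≤ 4 * 2 ^ (m + m') * ρ α * σ β := by
        nlinarith [mul_nonneg (hρ0 _ hα0) (hσ0 _ hβ0), hpow]
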